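/- Let q be a prime power and let V be a t-dimensional vector space over F_q, where t ≥ 2 is even, equipped with a non-degenerate alternating bilinear form B. Then the number of F_q-subspaces W of V satisfying W ∩ W^⊥ = {0} equals 2 + Σ_{k even, 2 ≤ k ≤ t−1} q^{k(t−k)/2} [t/2, k/2]_{q²}. -/

import Mathlib

/-- Gaussian binomial coefficient with rational base `Q`:
`[a, b]_Q = ∏_{i=0}^{b-1} (Q^a - Q^i)/(Q^b - Q^i)`. -/
def gbinom (Q : ℚ) (a b : ℕ) : ℚ :=
  ∏ i ∈ Finset.range b, (Q ^ a - Q ^ i) / (Q ^ b - Q ^ i)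

open Module LinearMap Finset
set_option linter.unusedSectionVars false
set_option maxHeartbeats 1000000
variable {F : Type} [Field F] {V : Type} [AddCommGroup V] [Module F V]

def fcount (q d m : ℕ) : ℕ := ∏ i ∈ Finset.range m, ((q ^ (d - 2*i) - 1) * q ^ (d - 2*i - 1))
def IsSymp (B : LinearMap.BilinForm F V) (m : ℕ) (p : (Fin m → V) × (Fin m → V)) : Prop :=
  (∀ i j, B (p.1 i) (p.1 j) = 0) ∧ (∀ i j, B (p.2 i) (p.2 j) = 0) ∧
    (∀ i j, B (p.1 i) (p.2 j) = if i = j then (1 : F) else 0)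
def Symp (B : LinearMap.BilinForm F V) (m : ℕ) : Type :=
  {p : (Fin m → V) × (Fin m → V) // IsSymp B m p}
lemma symp_li (B : LinearMap.BilinForm F V) {m : ℕ} (s : Symp B m) :
    LinearIndependent F (Sum.elim s.1.1 s.1.2) := by
  obtain ⟨⟨e, f⟩, h1, h2, h3⟩ := s
  simp only at h1 h2 h3 ⊢
  rw [Fintype.linearIndependent_iff]
  intro g hg i
  cases i with
  | inl j =>
    have := congrArg (fun x => B x (f j)) hg
    simp only [Fintype.sum_sum_type, Sum.elim_inl, Sum.elim_inr, map_add, map_sum, map_smul,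
      LinearMap.add_apply, LinearMap.sum_apply, LinearMap.smul_apply, smul_eq_mul,
      map_zero, LinearMap.zero_apply,
      h3, h2, mul_zero, Finset.sum_const_zero, add_zero, mul_ite, mul_one] at this
    rwa [Finset.sum_ite_eq' Finset.univ j (fun i => g (Sum.inl i)), if_pos (Finset.mem_univ j)] at this
  | inr j =>
    have := congrArg (fun x => B (e j) x) hg
    simp only [Fintype.sum_sum_type, Sum.elim_inl, Sum.elim_inr, map_add, map_sum, map_smul,
      smul_eq_mul, map_zero,
      h1, h3, mul_zero, Finset.sum_const_zero, zero_add, mul_ite, mul_one] at this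
    rwa [Finset.sum_ite_eq Finset.univ j (fun i => g (Sum.inr i)), if_pos (Finset.mem_univ j)] at this



lemma skew (B : LinearMap.BilinForm F V) (halt : ∀ v : V, B v v = 0) (x y : V) :
    B x y = - B y x := ((show B.IsAlt from halt).neg_eq y x).symm

section Split
variable [FiniteDimensional F V] {B : LinearMap.BilinForm F V}
  (halt : ∀ v : V, B v v = 0) (hnd : B.Nondegenerate) {a b : V} (hab : B a b = 1)

include halt hab

lemma mem_orth_pair {x : V} :
    x ∈ B.orthogonal (Submodule.span F {a, b}) ↔ B a x = 0 ∧ B b x = 0 := by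
  rw [LinearMap.BilinForm.mem_orthogonal_iff]
  constructor
  · intro h
    exact ⟨h a (Submodule.subset_span (by simp)), h b (Submodule.subset_span (by simp))⟩
  · rintro ⟨h1, h2⟩ n hn
    obtain ⟨c, d, rfl⟩ := Submodule.mem_span_pair.mp hn
    show B _ x = 0
    simp [map_add, map_smul, h1, h2]

lemma pair_li : LinearIndependent F ![a, b] := by
  rw [LinearIndependent.pair_iff]
  intro s t h
  have h1 := congrArg (fun z => B z b) h
  have h2 := congrArg (fun z => B z a) h
  simp only [map_add, map_smul, LinearMap.add_apply, LinearMap.smul_apply, smul_eq_mul,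
    map_zero, LinearMap.zero_apply, hab, halt] at h1 h2
  have hba : B b a = -1 := by rw [skew B halt b a, hab]
  constructor
  · simpa [hba] using h1
  · simpa [hba] using h2

lemma finrank_span_pair_eq : finrank F (Submodule.span F {a, b}) = 2 := by
  have h := finrank_span_eq_card (pair_li halt hab)
  rw [show Set.range ![a, b] = {a, b} by
    simp [Matrix.range_cons, Matrix.range_empty, Set.pair_comm]] at h
  simpa using h

include hnd

lemma disjoint_pair_orth :
    Disjoint (Submodule.span F {a, b}) (B.orthogonal (Submodule.span F {a, b})) := by
  rw [Submodule.disjoint_def]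
  intro x hx hx'
  obtain ⟨c, d, rfl⟩ := Submodule.mem_span_pair.mp hx
  obtain ⟨h1, h2⟩ := (mem_orth_pair halt hab).mp hx'
  have hba : B b a = -1 := by rw [skew B halt b a, hab]
  simp only [map_add, map_smul, smul_eq_mul, halt, hab, hba, mul_zero, mul_one,
    mul_neg, zero_add, add_zero] at h1 h2
  -- h1 : B a (c•a + d•b) = d = 0, h2 : c * (-1) = 0
  rw [neg_eq_zero.mp h2, h1]
  simp

lemma isCompl_pair_orth :
    IsCompl (Submodule.span F {a, b}) (B.orthogonal (Submodule.span F {a, b})) :=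
  (LinearMap.BilinForm.isCompl_orthogonal_iff_disjoint
    (show B.IsAlt from halt).isRefl).mpr (disjoint_pair_orth halt hnd hab)

lemma finrank_orth_pair :
    finrank F (B.orthogonal (Submodule.span F {a, b})) = finrank F V - 2 := by
  rw [LinearMap.BilinForm.finrank_orthogonal hnd,
    finrank_span_pair_eq halt hab]

lemma orth_pair_nondeg :
    (B.restrict (B.orthogonal (Submodule.span F {a, b}))).Nondegenerate := by
  apply LinearMap.BilinForm.nondegenerate_restrict_of_disjoint_orthogonal B
    (show B.IsAlt from halt).isRefl
  rw [LinearMap.BilinForm.orthogonal_orthogonal hnd (show B.IsAlt from halt).isRefl]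
  exact (disjoint_pair_orth halt hnd hab).symm

end Split



lemma card_sigma_const {ι : Type} [Finite ι] (T : ι → Type) [∀ i, Finite (T i)] (c : ℕ)
    (h : ∀ i, Nat.card (T i) = c) : Nat.card ((i : ι) × T i) = Nat.card ι * c := by
  cases nonempty_fintype ι
  have : ∀ i, Fintype (T i) := fun i => Fintype.ofFinite _
  rw [Nat.card_eq_fintype_card, Fintype.card_sigma]
  simp only [← Nat.card_eq_fintype_card, h, Finset.sum_const, smul_eq_mul]
  rw [Finset.card_univ, Nat.card_eq_fintype_card]

lemma card_module [Fintype F] [FiniteDimensional F V] :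
    Nat.card V = Fintype.card F ^ finrank F V := by
  have : Finite V := Module.finite_of_finite F
  have : Fintype V := Fintype.ofFinite V
  rw [Nat.card_eq_fintype_card, card_eq_pow_finrank (K := F)]

lemma card_submodule [Fintype F] [FiniteDimensional F V] (W : Submodule F V) :
    Nat.card W = Fintype.card F ^ finrank F W := card_module

lemma card_pairs [Fintype F] [FiniteDimensional F V] (B : LinearMap.BilinForm F V)
    (hnd : B.Nondegenerate) :
    Nat.card {p : V × V // p.1 ≠ 0 ∧ B p.1 p.2 = 1} =
      (Fintype.card F ^ finrank F V - 1) * Fintype.card F ^ (finrank F V - 1) := by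
  have hfin : Finite V := Module.finite_of_finite F
  have hV : Fintype V := Fintype.ofFinite V
  set q := Fintype.card F
  set d := finrank F V
  -- equivalence with sigma type
  let e : {p : V × V // p.1 ≠ 0 ∧ B p.1 p.2 = 1} ≃
      (a : {v : V // v ≠ 0}) × {w : V // B a.1 w = 1} :=
    { toFun := fun p => ⟨⟨p.1.1, p.2.1⟩, ⟨p.1.2, p.2.2⟩⟩
      invFun := fun x => ⟨(x.1.1, x.2.1), x.1.2, x.2.2⟩
      left_inv := fun p => rfl
      right_inv := fun x => rfl }
  rw [Nat.card_congr e]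
  rw [card_sigma_const _ (q ^ (d - 1))]
  · congr 1
    classical
    rw [Nat.card_eq_fintype_card, Fintype.card_subtype_compl, Fintype.card_subtype_eq,
      ← Nat.card_eq_fintype_card, card_module (F := F) (V := V)]
  · rintro ⟨a, ha⟩
    -- B a is surjective
    have hne : B a ≠ 0 := fun h => ha (hnd.1 a (fun w => by rw [h]; rfl))
    have hsurj : LinearMap.range (B a) = ⊤ := by
      rcases eq_bot_or_eq_top (LinearMap.range (B a)) with h | h
      · exact absurd (LinearMap.range_eq_bot.mp h) hne
      · exact h
    obtain ⟨w0, hw0⟩ := LinearMap.range_eq_top.mp hsurj 1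
    -- fiber equiv kernel
    let e2 : {w : V // B a w = 1} ≃ LinearMap.ker (B a) :=
      { toFun := fun w => ⟨w.1 - w0, by simp [LinearMap.mem_ker, map_sub, w.2, hw0]⟩
        invFun := fun k => ⟨k.1 + w0, by
          have := k.2
          rw [LinearMap.mem_ker] at this
          simp [map_add, this, hw0]⟩
        left_inv := fun w => by ext; simp
        right_inv := fun k => by ext; simp }
    rw [Nat.card_congr e2, card_submodule]
    congr 1
    have h2 := LinearMap.finrank_range_add_finrank_ker (B a)
    rw [hsurj] at h2
    simp only [finrank_top, finrank_self] at h2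
    omega

section FiberEquiv
variable [FiniteDimensional F V] {B : LinearMap.BilinForm F V}

/-- The fiber of the "first hyperbolic pair" map. -/
noncomputable def fiberEquiv (halt : ∀ v : V, B v v = 0) (hnd : B.Nondegenerate)
    (m : ℕ) (a b : V) (ha : a ≠ 0) (hab : B a b = 1) :
    {s : Symp B (m+1) // s.1.1 0 = a ∧ s.1.2 0 = b} ≃
      Symp (B.restrict (B.orthogonal (Submodule.span F {a, b}))) m where
  toFun := fun s =>
    ⟨(fun i => ⟨s.1.1.1 i.succ, by
        obtain ⟨⟨⟨e, f⟩, h1, h2, h3⟩, he0, hf0⟩ := s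
        simp only at he0 hf0 ⊢
        rw [mem_orth_pair halt hab, ← he0, ← hf0]
        refine ⟨h1 0 i.succ, ?_⟩
        rw [skew B halt, h3 i.succ 0, if_neg (Fin.succ_ne_zero i), neg_zero]⟩,
      fun i => ⟨s.1.1.2 i.succ, by
        obtain ⟨⟨⟨e, f⟩, h1, h2, h3⟩, he0, hf0⟩ := s
        simp only at he0 hf0 ⊢
        rw [mem_orth_pair halt hab, ← he0, ← hf0]
        refine ⟨?_, h2 0 i.succ⟩
        rw [h3 0 i.succ, if_neg (Fin.succ_ne_zero i).symm]⟩),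
      by
        obtain ⟨⟨⟨e, f⟩, h1, h2, h3⟩, he0, hf0⟩ := s
        refine ⟨fun i j => ?_, fun i j => ?_, fun i j => ?_⟩ <;>
          simp only [LinearMap.BilinForm.restrict_apply, LinearMap.domRestrict_apply]
        · exact h1 i.succ j.succ
        · exact h2 i.succ j.succ
        · rw [h3 i.succ j.succ]; simp [Fin.succ_inj]⟩
  invFun := fun t =>
    ⟨⟨(Fin.cons a (fun i => (t.1.1 i : V)), Fin.cons b (fun i => (t.1.2 i : V))), by
      obtain ⟨⟨e', f'⟩, h1, h2, h3⟩ := t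
      simp only
      have hea : ∀ i, B a (e' i : V) = 0 :=
        fun i => ((mem_orth_pair halt hab).mp (e' i).2).1
      have heb : ∀ i, B b (e' i : V) = 0 :=
        fun i => ((mem_orth_pair halt hab).mp (e' i).2).2
      have hfa : ∀ i, B a (f' i : V) = 0 :=
        fun i => ((mem_orth_pair halt hab).mp (f' i).2).1
      have hfb : ∀ i, B b (f' i : V) = 0 :=
        fun i => ((mem_orth_pair halt hab).mp (f' i).2).2
      have h1' : ∀ i j, B (e' i : V) (e' j : V) = 0 := fun i j => h1 i j
      have h2' : ∀ i j, B (f' i : V) (f' j : V) = 0 := fun i j => h2 i j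
      have h3' : ∀ i j, B (e' i : V) (f' j : V) = if i = j then 1 else 0 :=
        fun i j => h3 i j
      refine ⟨fun i j => ?_, fun i j => ?_, fun i j => ?_⟩ <;>
        (refine Fin.cases ?_ (fun i' => ?_) i <;> refine Fin.cases ?_ (fun j' => ?_) j <;>
          simp only [Fin.cons_zero, Fin.cons_succ])
      · exact halt a
      · exact hea j'
      · rw [skew B halt, hea i', neg_zero]
      · exact h1' i' j'
      · exact halt b
      · exact hfb j'
      · rw [skew B halt, hfb i', neg_zero]
      · exact h2' i' j'
      · simp [hab]
      · rw [hfa j', if_neg (Fin.succ_ne_zero j').symm]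
      · rw [skew B halt, heb i', neg_zero, if_neg (Fin.succ_ne_zero i')]
      · rw [h3' i' j']; simp [Fin.succ_inj]⟩,
      by simp, by simp⟩
  left_inv := fun s => by
    apply Subtype.ext
    apply Subtype.ext
    obtain ⟨⟨⟨e, f⟩, hs⟩, he0, hf0⟩ := s
    simp only at he0 hf0
    simp only
    refine Prod.ext ?_ ?_ <;> (funext i; refine Fin.cases ?_ (fun i' => ?_) i) <;>
      simp [he0, hf0]
  right_inv := fun t => by
    apply Subtype.ext
    obtain ⟨⟨e', f'⟩, ht⟩ := t
    simp only
    refine Prod.ext ?_ ?_ <;> (funext i; apply Subtype.ext) <;> simp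

end FiberEquiv

lemma card_symp [Fintype F] :
    ∀ d : ℕ, ∀ (V : Type) [AddCommGroup V] [Module F V] [FiniteDimensional F V],
      finrank F V = d → ∀ (B : LinearMap.BilinForm F V), (∀ v : V, B v v = 0) →
      B.Nondegenerate → ∀ m, Nat.card (Symp B m) = fcount (Fintype.card F) d m := by
  intro d
  induction d using Nat.strong_induction_on with
  | _ d IH =>
  intro V _ _ _ hdim B halt hnd m
  have hfinV : Finite V := Module.finite_of_finite F
  set q := Fintype.card F with hq
  match m with
  | 0 =>
    have hu : Unique (Symp B 0) :=
      { default := ⟨(fun i => i.elim0, fun i => i.elim0),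
          fun i => i.elim0, fun i => i.elim0, fun i => i.elim0⟩
        uniq := fun s => by
          apply Subtype.ext
          refine Prod.ext ?_ ?_ <;> funext i <;> exact i.elim0 }
    rw [Nat.card_unique]
    simp [fcount]
  | Nat.succ m =>
    rcases Nat.lt_or_ge d 2 with hd | hd
    · match d, hd with
      | 0, _ =>
        have hss : Subsingleton V := Module.finrank_zero_iff.mp hdim
        have he : IsEmpty (Symp B 1) ∨ True := Or.inr trivial
        have : IsEmpty (Symp B (m+1)) := by
          constructor
          rintro ⟨⟨e, f⟩, h1, h2, h3⟩
          have := h3 0 0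
          rw [if_pos rfl] at this
          have h0 : (e, f).1 0 = (0 : V) := Subsingleton.elim _ _
          rw [h0] at this
          simp at this
        rw [Nat.card_of_isEmpty, fcount]
        rw [Finset.prod_eq_zero (Finset.mem_range.mpr (Nat.succ_pos m))]
        simp
      | 1, _ =>
        exfalso
        have : Nontrivial V := by
          apply Module.nontrivial_of_finrank_pos (R := F); omega
        obtain ⟨v, hv⟩ := exists_ne (0 : V)
        have hsp : Submodule.span F {v} = ⊤ :=
          Submodule.eq_top_of_finrank_eq (by rw [finrank_span_singleton hv, hdim])
        apply hv
        apply hnd.1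
        intro w
        have hw : w ∈ Submodule.span F {v} := hsp ▸ Submodule.mem_top
        obtain ⟨c, rfl⟩ := Submodule.mem_span_singleton.mp hw
        rw [map_smul, smul_eq_mul, halt, mul_zero]
    · -- main case : d ≥ 2
      set P := {p : V × V // p.1 ≠ 0 ∧ B p.1 p.2 = 1} with hP
      have hφaux : ∀ s : Symp B (m+1), s.1.1 0 ≠ 0 ∧ B (s.1.1 0) (s.1.2 0) = 1 := by
        rintro ⟨⟨e, f⟩, h1, h2, h3⟩
        have h30 := h3 0 0
        rw [if_pos rfl] at h30
        refine ⟨fun h0 => ?_, h30⟩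
        rw [h0] at h30
        simp at h30
      set φ : Symp B (m+1) → P := fun s => ⟨(s.1.1 0, s.1.2 0), (hφaux s).1, (hφaux s).2⟩
        with hφ
      haveI : Finite (Symp B (m+1)) := Subtype.finite
      haveI : Finite P := Subtype.finite
      haveI : ∀ p : P, Finite {s : Symp B (m+1) // φ s = p} := fun p => Subtype.finite
      rw [← Nat.card_congr (Equiv.sigmaFiberEquiv φ)]
      rw [card_sigma_const _ (fcount q (d-2) m)]
      · rw [hP, card_pairs B hnd, hdim, ← hq]
        simp only [fcount]
        rw [Finset.prod_range_succ']
        have hterm : ∀ i ∈ Finset.range m,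
            ((q ^ (d - 2*(i+1)) - 1) * q ^ (d - 2*(i+1) - 1)) =
            ((q ^ ((d-2) - 2*i) - 1) * q ^ ((d-2) - 2*i - 1)) := by
          intro i _
          have e1 : d - 2*(i+1) = (d-2) - 2*i := by omega
          rw [e1]
        rw [Finset.prod_congr rfl hterm]
        simp only [Nat.mul_zero, Nat.sub_zero]
        ring
      · intro p
        have he1 : {s : Symp B (m+1) // φ s = p} ≃
            {s : Symp B (m+1) // s.1.1 0 = p.1.1 ∧ s.1.2 0 = p.1.2} :=
          Equiv.subtypeEquivRight (fun s => by
            rw [hφ, Subtype.ext_iff, Prod.ext_iff])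
        rw [Nat.card_congr (he1.trans (fiberEquiv halt hnd m p.1.1 p.1.2 p.2.1 p.2.2))]
        have hW : finrank F (B.orthogonal (Submodule.span F {p.1.1, p.1.2})) = d - 2 := by
          rw [finrank_orth_pair halt hnd p.2.2, hdim]
        exact IH (d-2) (by omega) _ hW _
          (fun x => by
            simp only [LinearMap.BilinForm.restrict_apply, LinearMap.domRestrict_apply]
            exact halt x)
          (orth_pair_nondeg halt hnd p.2.2) m

section StepA
variable [Fintype F] [FiniteDimensional F V] {B : LinearMap.BilinForm F V}

/-- the span of a symplectic sequence -/
def spanOf {m : ℕ} (s : Symp B m) : Submodule F V :=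
  Submodule.span F (Set.range (Sum.elim s.1.1 s.1.2))

lemma mem_spanOf_e {m : ℕ} (s : Symp B m) (i : Fin m) : s.1.1 i ∈ spanOf s :=
  Submodule.subset_span ⟨Sum.inl i, rfl⟩

lemma mem_spanOf_f {m : ℕ} (s : Symp B m) (i : Fin m) : s.1.2 i ∈ spanOf s :=
  Submodule.subset_span ⟨Sum.inr i, rfl⟩

lemma finrank_spanOf {m : ℕ} (s : Symp B m) : finrank F (spanOf s) = m + m := by
  have h := finrank_span_eq_card (symp_li B s)
  simp [spanOf] at h ⊢
  exact h

lemma pred_spanOf (halt : ∀ v : V, B v v = 0) {m : ℕ} (s : Symp B m) :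
    ∀ v ∈ spanOf s, (∀ w ∈ spanOf s, B v w = 0) → v = 0 := by
  obtain ⟨⟨e, f⟩, h1, h2, h3⟩ := s
  intro v hv hw
  obtain ⟨c, hc⟩ := (Submodule.mem_span_range_iff_exists_fun F).mp hv
  have hc0 : ∀ i, c i = 0 := by
    intro i
    cases i with
    | inl j =>
      have h0 := hw _ (mem_spanOf_f ⟨(e, f), h1, h2, h3⟩ j)
      rw [← hc] at h0
      simp only [Fintype.sum_sum_type, Sum.elim_inl, Sum.elim_inr, map_add, map_sum, map_smul,
        LinearMap.add_apply, LinearMap.sum_apply, LinearMap.smul_apply, smul_eq_mul,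
        h3, h2, mul_zero, Finset.sum_const_zero, add_zero, mul_ite, mul_one] at h0
      rwa [Finset.sum_ite_eq' Finset.univ j (fun i => c (Sum.inl i)),
        if_pos (Finset.mem_univ j)] at h0
    | inr j =>
      have h0 := hw _ (mem_spanOf_e ⟨(e, f), h1, h2, h3⟩ j)
      rw [← hc] at h0
      simp only [Fintype.sum_sum_type, Sum.elim_inl, Sum.elim_inr, map_add, map_sum, map_smul,
        LinearMap.add_apply, LinearMap.sum_apply, LinearMap.smul_apply, smul_eq_mul, h1,
        mul_zero, Finset.sum_const_zero, zero_add] at h0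
      have hs : ∀ i : Fin m, B (f i) (e j) = if j = i then (-1 : F) else 0 := fun i => by
        rw [skew B halt, h3 j i]; split <;> simp
      simp only [hs, mul_ite, mul_neg_one, mul_zero] at h0
      rw [Finset.sum_ite_eq Finset.univ j (fun i => -c (Sum.inr i)),
        if_pos (Finset.mem_univ j)] at h0
      exact neg_eq_zero.mp h0
  rw [← hc]
  simp [hc0]

lemma restrict_nondeg_of_pred {W : Submodule F V}
    (hW : ∀ v ∈ W, (∀ w ∈ W, B v w = 0) → v = 0) : (B.restrict W).Nondegenerate := by
  refine LinearMap.BilinForm.Nondegenerate.ofSeparatingLeft ?_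
  intro x hx
  have hx0 : (x : V) = 0 := by
    apply hW x.1 x.2
    intro w hw
    have := hx ⟨w, hw⟩
    simpa using this
  exact Subtype.ext hx0

lemma restrict_alt (halt : ∀ v : V, B v v = 0) (W : Submodule F V) :
    ∀ x : W, (B.restrict W) x x = 0 := fun x => by
  simp only [LinearMap.BilinForm.restrict_apply, LinearMap.domRestrict_apply]
  exact halt x

/-- Fiber equivalence for the span map. -/
noncomputable def fiberEquivA (m : ℕ) (W : Submodule F V) (hrk : finrank F W = m + m) :
    {s : Symp B m // spanOf s = W} ≃ Symp (B.restrict W) m where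
  toFun := fun s =>
    ⟨(fun i => ⟨s.1.1.1 i, by obtain ⟨s', hs⟩ := s; show s'.1.1 i ∈ W; rw [← hs]; exact mem_spanOf_e s' i⟩,
      fun i => ⟨s.1.1.2 i, by obtain ⟨s', hs⟩ := s; show s'.1.2 i ∈ W; rw [← hs]; exact mem_spanOf_f s' i⟩), by
      obtain ⟨⟨⟨e, f⟩, h1, h2, h3⟩, hsp⟩ := s
      refine ⟨fun i j => ?_, fun i j => ?_, fun i j => ?_⟩ <;>
        simp only [LinearMap.BilinForm.restrict_apply, LinearMap.domRestrict_apply]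
      · exact h1 i j
      · exact h2 i j
      · exact h3 i j⟩
  invFun := fun t =>
    ⟨⟨(fun i => (t.1.1 i : V), fun i => (t.1.2 i : V)), by
      obtain ⟨⟨e', f'⟩, h1, h2, h3⟩ := t
      exact ⟨fun i j => h1 i j, fun i j => h2 i j, fun i j => h3 i j⟩⟩, by
      apply Submodule.eq_of_le_of_finrank_le
      · unfold spanOf; rw [Submodule.span_le]
        rintro x ⟨i, rfl⟩
        cases i with
        | inl j => exact (t.1.1 j).2
        | inr j => exact (t.1.2 j).2
      · rw [hrk]; exact (finrank_spanOf _).ge⟩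
  left_inv := fun s => by
    apply Subtype.ext
    apply Subtype.ext
    rfl
  right_inv := fun t => by
    apply Subtype.ext
    refine Prod.ext ?_ ?_ <;> (funext i; apply Subtype.ext) <;> rfl

lemma card_T (halt : ∀ v : V, B v v = 0) (hnd : B.Nondegenerate) (m : ℕ) :
    fcount (Fintype.card F) (finrank F V) m =
      Nat.card {W : Submodule F V // (∀ v ∈ W, (∀ w ∈ W, B v w = 0) → v = 0) ∧
        finrank F W = m + m} * fcount (Fintype.card F) (m + m) m := by
  have hfinV : Finite V := Module.finite_of_finite F
  haveI : Finite (Symp B m) := Subtype.finite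
  set T := {W : Submodule F V // (∀ v ∈ W, (∀ w ∈ W, B v w = 0) → v = 0) ∧
    finrank F W = m + m} with hT
  set φ : Symp B m → T := fun s => ⟨spanOf s, pred_spanOf halt s, finrank_spanOf s⟩ with hφ
  haveI : Finite T := Subtype.finite
  haveI : ∀ p : T, Finite {s : Symp B m // φ s = p} := fun p => Subtype.finite
  rw [← card_symp (finrank F V) V rfl B halt hnd m]
  rw [← Nat.card_congr (Equiv.sigmaFiberEquiv φ)]
  rw [card_sigma_const _ (fcount (Fintype.card F) (m + m) m)]
  intro p
  have he1 : {s : Symp B m // φ s = p} ≃ {s : Symp B m // spanOf s = p.1} :=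
    Equiv.subtypeEquivRight (fun s => by rw [hφ, Subtype.ext_iff])
  rw [Nat.card_congr (he1.trans (fiberEquivA m p.1 p.2.2))]
  exact card_symp (m + m) p.1 p.2.2 (B.restrict p.1) (restrict_alt halt p.1)
    (restrict_nondeg_of_pred p.2.1) m

lemma pred_even (halt : ∀ v : V, B v v = 0) {W : Submodule F V}
    (hW : ∀ v ∈ W, (∀ w ∈ W, B v w = 0) → v = 0) : ∃ m, finrank F W = m + m := by
  rcases Nat.even_or_odd (finrank F W) with he | ho
  · obtain ⟨m, hm⟩ := he
    exact ⟨m, hm⟩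
  · exfalso
    obtain ⟨k, hk⟩ := ho
    set m0 := k + 1 with hm0
    have hfinV : Finite V := Module.finite_of_finite F
    have hcard := card_symp (finrank F W) W rfl (B.restrict W) (restrict_alt halt W)
      (restrict_nondeg_of_pred hW) m0
    have hq2 : 1 < Fintype.card F := Fintype.one_lt_card
    have hpos : 0 < fcount (Fintype.card F) (finrank F W) m0 := by
      rw [fcount]
      apply Finset.prod_pos
      intro i hi
      rw [Finset.mem_range] at hi
      have hexp : 1 ≤ finrank F W - 2 * i := by omega
      have h1 : 1 < Fintype.card F ^ (finrank F W - 2 * i) :=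
        Nat.one_lt_pow (by omega) hq2
      have h2 : 0 < Fintype.card F ^ (finrank F W - 2 * i - 1) :=
        Nat.pow_pos (by omega)
      exact Nat.mul_pos (by omega) h2
    rw [← hcard] at hpos
    obtain ⟨⟨s⟩, -⟩ := Nat.card_ne_zero.mp (Nat.pos_iff_ne_zero.mp hpos)
    have hle := (symp_li (B.restrict W) s).fintype_card_le_finrank
    simp only [Fintype.card_sum, Fintype.card_fin] at hle
    omega

lemma card_sigma_sum {k : ℕ} (T : Fin k → Type) [∀ i, Finite (T i)] :
    Nat.card ((i : Fin k) × T i) = ∑ i : Fin k, Nat.card (T i) := by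
  have : ∀ i, Fintype (T i) := fun i => Fintype.ofFinite _
  rw [Nat.card_eq_fintype_card, Fintype.card_sigma]
  simp [Nat.card_eq_fintype_card]

lemma card_partition (halt : ∀ v : V, B v v = 0) (n : ℕ) (hn : finrank F V = n + n) :
    Nat.card {W : Submodule F V // ∀ v ∈ W, (∀ w ∈ W, B v w = 0) → v = 0} =
      ∑ m ∈ Finset.range (n+1),
        Nat.card {W : Submodule F V // (∀ v ∈ W, (∀ w ∈ W, B v w = 0) → v = 0) ∧
          finrank F W = m + m} := by
  have hfinV : Finite V := Module.finite_of_finite F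
  haveI : Finite (Submodule F V) := Finite.of_injective _ SetLike.coe_injective
  set ψ : {W : Submodule F V // ∀ v ∈ W, (∀ w ∈ W, B v w = 0) → v = 0} → Fin (n+1) :=
    fun W => ⟨finrank F W.1 / 2, by
      have h1 := Submodule.finrank_le W.1
      omega⟩ with hψ
  haveI : ∀ i, Finite {W' : {W : Submodule F V // ∀ v ∈ W, (∀ w ∈ W, B v w = 0) → v = 0} //
    ψ W' = i} := fun i => Subtype.finite
  rw [← Nat.card_congr (Equiv.sigmaFiberEquiv ψ), card_sigma_sum]
  have key : ∀ i : Fin (n+1),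
      Nat.card {W' : {W : Submodule F V // ∀ v ∈ W, (∀ w ∈ W, B v w = 0) → v = 0} // ψ W' = i} =
      Nat.card {W : Submodule F V // (∀ v ∈ W, (∀ w ∈ W, B v w = 0) → v = 0) ∧
        finrank F W = (i : ℕ) + (i : ℕ)} := by
    intro i
    apply Nat.card_congr
    refine ⟨fun x => ⟨x.1.1, x.1.2, ?_⟩, fun y => ⟨⟨y.1, y.2.1⟩, ?_⟩, fun x => ?_, fun y => ?_⟩
    · obtain ⟨m, hm⟩ := pred_even halt x.1.2
      have hv := congrArg Fin.val x.2
      simp only [hψ] at hv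
      omega
    · apply Fin.ext
      simp only [hψ]
      omega
    · apply Subtype.ext; apply Subtype.ext; rfl
    · apply Subtype.ext; rfl
  rw [Finset.sum_congr rfl (fun i _ => key i)]
  exact Fin.sum_univ_eq_sum_range
    (fun m => Nat.card {W : Submodule F V // (∀ v ∈ W, (∀ w ∈ W, B v w = 0) → v = 0) ∧
      finrank F W = m + m}) (n+1)

end StepA

def gbinom' (Q : ℚ) (a b : ℕ) : ℚ :=
  ∏ i ∈ Finset.range b, (Q ^ a - Q ^ i) / (Q ^ b - Q ^ i)

lemma fcount_pos {q : ℕ} (hq : 1 < q) {d m : ℕ} (h : 2*m ≤ d) : 0 < fcount q d m := by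
  rw [fcount]
  apply Finset.prod_pos
  intro i hi
  rw [Finset.mem_range] at hi
  have h1 : 1 < q ^ (d - 2*i) := Nat.one_lt_pow (by omega) hq
  have h2 : 0 < q ^ (d - 2*i - 1) := Nat.pow_pos (by omega)
  exact Nat.mul_pos (by omega) h2

lemma fcount_cast (q : ℕ) (hq : 1 < q) (D m : ℕ) :
    (fcount q D m : ℚ) =
      ∏ i ∈ Finset.range m, (((q:ℚ)) ^ (D - 2*i) - 1) * ((q:ℚ)) ^ (D - 2*i - 1) := by
  rw [fcount, Nat.cast_prod]
  apply Finset.prod_congr rfl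
  intro i _
  rw [Nat.cast_mul, Nat.cast_sub (Nat.one_le_pow _ _ (by omega)), Nat.cast_pow,
    Nat.cast_pow, Nat.cast_one]

lemma fcount_ratio (q : ℕ) (hq : 1 < q) (n m : ℕ) (hm : m ≤ n) :
    (fcount q (n+n) m : ℚ) =
      (q:ℚ) ^ (2*(m*(n-m))) * gbinom' ((q:ℚ)^2) n m * (fcount q (m+m) m : ℚ) := by
  have hq1 : (1:ℚ) < (q:ℚ) := by exact_mod_cast hq
  rw [fcount_cast q hq, fcount_cast q hq, gbinom']
  rw [show (q:ℚ)^(2*(m*(n-m))) = ∏ _i ∈ Finset.range m, (q:ℚ)^(2*(n-m)) by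
    rw [Finset.prod_const, Finset.card_range, ← pow_mul]; congr 1; ring]
  rw [← Finset.prod_mul_distrib, ← Finset.prod_mul_distrib]
  apply Finset.prod_congr rfl
  intro i hi
  rw [Finset.mem_range] at hi
  have hB : ((q:ℚ)^2)^m - ((q:ℚ)^2)^i ≠ 0 := by
    have h2 : (1:ℚ) < (q:ℚ)^2 := by nlinarith
    have : ((q:ℚ)^2)^i < ((q:ℚ)^2)^m := pow_lt_pow_right₀ h2 hi
    linarith
  rw [show (q:ℚ)^(2*(n-m)) * ((((q:ℚ)^2)^n - ((q:ℚ)^2)^i) / (((q:ℚ)^2)^m - ((q:ℚ)^2)^i)) *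
      (((q:ℚ)^(m+m-2*i) - 1) * (q:ℚ)^(m+m-2*i-1)) =
      ((q:ℚ)^(2*(n-m)) * (((q:ℚ)^2)^n - ((q:ℚ)^2)^i) *
        (((q:ℚ)^(m+m-2*i) - 1) * (q:ℚ)^(m+m-2*i-1))) / (((q:ℚ)^2)^m - ((q:ℚ)^2)^i) by
    ring]
  rw [eq_div_iff hB]
  have e1 : n + n - 2*i = 2*(m-i-1) + 2*(n-m) + 2 := by omega
  have e2 : n + n - 2*i - 1 = 2*(m-i-1) + 2*(n-m) + 1 := by omega
  have e3 : m + m - 2*i = 2*(m-i-1) + 2 := by omega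
  have e4 : m + m - 2*i - 1 = 2*(m-i-1) + 1 := by omega
  have e5 : ((q:ℚ)^2)^n = (q:ℚ)^(2*i + (2*(m-i-1) + 2*(n-m) + 2)) := by
    rw [← pow_mul]; congr 1; omega
  have e6 : ((q:ℚ)^2)^m = (q:ℚ)^(2*i + (2*(m-i-1) + 2)) := by
    rw [← pow_mul]; congr 1; omega
  have e7 : ((q:ℚ)^2)^i = (q:ℚ)^(2*i) := by rw [← pow_mul]
  rw [e2, e1, e4, e3, e5, e6, e7]
  ring

lemma gbinom'_zero (Q : ℚ) (a : ℕ) : gbinom' Q a 0 = 1 := by simp [gbinom']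

lemma gbinom'_self (Q : ℚ) (hQ : 1 < Q) (n : ℕ) : gbinom' Q n n = 1 := by
  rw [gbinom']
  apply Finset.prod_eq_one
  intro i hi
  rw [Finset.mem_range] at hi
  have : Q^i < Q^n := pow_lt_pow_right₀ hQ hi
  exact div_self (by linarith)

lemma gbinom_eq (Q : ℚ) (a b : ℕ) : gbinom Q a b = gbinom' Q a b := rfl



/-- number of non-degenerate subspaces of a non-degenerate
symplectic (alternating) space of even dimension `t` over `F_q`. -/
theorem count_nondegenerate_subspaces_symplectic
    (q t : ℕ) (hq : IsPrimePow q) (ht : 2 ≤ t) (hteven : Even t)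
    (F : Type) [Field F] [Fintype F] (hF : Fintype.card F = q)
    (V : Type) [AddCommGroup V] [Module F V] [FiniteDimensional F V]
    (hdim : Module.finrank F V = t)
    (B : LinearMap.BilinForm F V)
    (halt : ∀ v : V, B v v = 0)
    (hnd : ∀ v : V, (∀ w : V, B v w = 0) → v = 0) :
    (Nat.card {W : Submodule F V // ∀ v ∈ W, (∀ w ∈ W, B v w = 0) → v = 0} : ℚ) =
      2 + ∑ k ∈ (Finset.Icc 2 (t - 1)).filter (fun k => k % 2 = 0),
        (q : ℚ) ^ (k * (t - k) / 2) * gbinom ((q : ℚ) ^ 2) (t / 2) (k / 2) := by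

  subst hF
  obtain ⟨n, hn⟩ := hteven
  have hn1 : 1 ≤ n := by omega
  have hq2 : 1 < Fintype.card F := Fintype.one_lt_card
  have hQ1 : (1:ℚ) < ((Fintype.card F : ℚ))^2 := by
    have : (2:ℚ) ≤ (Fintype.card F : ℚ) := by exact_mod_cast hq2
    nlinarith
  have hndB : B.Nondegenerate := LinearMap.BilinForm.Nondegenerate.ofSeparatingLeft hnd
  rw [card_partition halt n (by omega), Nat.cast_sum]
  have key : ∀ m ∈ Finset.range (n+1),
      ((Nat.card {W : Submodule F V // (∀ v ∈ W, (∀ w ∈ W, B v w = 0) → v = 0) ∧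
        finrank F W = m + m} : ℚ)) =
      (Fintype.card F : ℚ) ^ (2*(m*(n-m))) * gbinom' ((Fintype.card F : ℚ)^2) n m := by
    intro m hm
    rw [Finset.mem_range] at hm
    have hTm := card_T halt hndB m
    rw [hdim, hn] at hTm
    have hne : ((fcount (Fintype.card F) (m+m) m : ℕ) : ℚ) ≠ 0 :=
      Nat.cast_ne_zero.mpr (fcount_pos hq2 (by omega)).ne'
    have hc : ((fcount (Fintype.card F) (n+n) m : ℕ) : ℚ) =
        (Nat.card {W : Submodule F V // (∀ v ∈ W, (∀ w ∈ W, B v w = 0) → v = 0) ∧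
          finrank F W = m + m} : ℚ) * ((fcount (Fintype.card F) (m+m) m : ℕ) : ℚ) := by
      exact_mod_cast congrArg (Nat.cast (R := ℚ)) hTm
    have hr := fcount_ratio (Fintype.card F) hq2 n m (by omega)
    apply mul_right_cancel₀ hne
    rw [← hc, hr]
  rw [Finset.sum_congr rfl key]
  have hsplit : Finset.range (n+1) = insert 0 (insert n (Finset.Icc 1 (n-1))) := by
    ext x
    simp only [Finset.mem_range, Finset.mem_insert, Finset.mem_Icc]
    omega
  rw [hsplit, Finset.sum_insert (by simp only [Finset.mem_insert, Finset.mem_Icc]; omega),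
    Finset.sum_insert (by simp only [Finset.mem_Icc]; omega)]
  have h0 : (Fintype.card F : ℚ) ^ (2*(0*(n-0))) * gbinom' ((Fintype.card F : ℚ)^2) n 0 = 1 := by
    simp [gbinom'_zero]
  have hnn : (Fintype.card F : ℚ) ^ (2*(n*(n-n))) * gbinom' ((Fintype.card F : ℚ)^2) n n = 1 := by
    rw [gbinom'_self _ hQ1]
    simp
  rw [h0, hnn]
  have hmain : ∑ m ∈ Finset.Icc 1 (n-1),
      (Fintype.card F : ℚ) ^ (2*(m*(n-m))) * gbinom' ((Fintype.card F : ℚ)^2) n m =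
      ∑ k ∈ (Finset.Icc 2 (t - 1)).filter (fun k => k % 2 = 0),
        (Fintype.card F : ℚ) ^ (k * (t - k) / 2) *
          gbinom ((Fintype.card F : ℚ) ^ 2) (t / 2) (k / 2) := by
    apply Finset.sum_nbij' (fun m => 2*m) (fun k => k/2)
    · intro a ha
      simp only [Finset.mem_Icc] at ha
      simp only [Finset.mem_filter, Finset.mem_Icc]
      omega
    · intro a ha
      simp only [Finset.mem_filter, Finset.mem_Icc] at ha
      simp only [Finset.mem_Icc]
      omega
    · intro a ha; omega
    · intro a ha
      simp only [Finset.mem_filter, Finset.mem_Icc] at ha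
      omega
    · intro a ha
      simp only [Finset.mem_Icc] at ha
      have h1 : t - 2*a = (n-a)+(n-a) := by omega
      have h2 : 2*a*(t - 2*a)/2 = 2*(a*(n-a)) := by
        rw [h1]
        have h3 : 2*a*((n-a)+(n-a)) = 2*(a*(n-a)) * 2 := by ring
        rw [h3, Nat.mul_div_cancel _ two_pos]
      rw [gbinom_eq, h2, show t/2 = n by omega, show 2*a/2 = a by omega]
  rw [hmain]
  ring
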